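/- arXiv:math/0202053 — 2 statements merged into one kernel-verified Lean document; each statement's English description precedes it below -/
import Mathlib

section
/- Let K be a real quadratic field and ε a fundamental unit of norm 1. Let α_2 = √ε be a real square root and Z_4 = K(i). Then α_2 ∉ Z_4, and [K(i, ε^{1/4}) : K(i)] = 4. -/
open IntermediateField


open Polynomial NumberField NumberField.Units NumberField.InfinitePlace in
private lemma span_lemma (E : IntermediateField ℚ ℂ) (z : ℂ) (hz : z ∉ E)
    (e : E) (he : (e : ℂ) = z ^ 2) :
    ∀ w ∈ E ⊔ adjoin ℚ {z}, ∃ a b : E, w = (a : ℂ) + (b : ℂ) * z := by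
  have hS : ∃ S : IntermediateField ℚ ℂ, (S : Set ℂ) = {w | ∃ a b : E, w = (a : ℂ) + (b : ℂ) * z} := by
    refine ⟨{ carrier := {w | ∃ a b : E, w = (a : ℂ) + (b : ℂ) * z}
              mul_mem' := ?_
              one_mem' := ⟨1, 0, by push_cast; ring⟩
              add_mem' := ?_
              zero_mem' := ⟨0, 0, by push_cast; ring⟩
              algebraMap_mem' := fun q => ⟨algebraMap ℚ E q, 0, by push_cast; simp⟩
              inv_mem' := ?_ }, rfl⟩
    · rintro x y ⟨a, b, rfl⟩ ⟨c, d, rfl⟩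
      exact ⟨a * c + b * d * e, a * d + b * c, by push_cast; rw [he]; ring⟩
    · rintro x y ⟨a, b, rfl⟩ ⟨c, d, rfl⟩
      exact ⟨a + c, b + d, by push_cast; ring⟩
    · rintro x ⟨a, b, rfl⟩
      by_cases hb : b = 0
      · exact ⟨a⁻¹, 0, by subst hb; rw [IntermediateField.coe_inv]; push_cast; ring⟩
      · have hb' : (b : ℂ) ≠ 0 := by exact_mod_cast hb
        have hdc : (a : ℂ) ^ 2 - (b : ℂ) ^ 2 * (e : ℂ) ≠ 0 := by
          intro h0
          apply hz
          have hc : (((a : ℂ)) / b) ^ 2 = z ^ 2 := by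
            rw [div_pow, eq_comm, eq_div_iff (pow_ne_zero 2 hb')]
            linear_combination -he * (b:ℂ)^2 - h0
          have h1 : (z - (a / b : E)) * (z + (a / b : E)) = 0 := by
            have hq : ((a / b : E) : ℂ) = (a : ℂ) / b := by
              rw [div_eq_mul_inv, div_eq_mul_inv, MulMemClass.coe_mul, IntermediateField.coe_inv]
            rw [hq]
            linear_combination -hc
          rcases mul_eq_zero.1 h1 with h | h
          · rw [sub_eq_zero] at h; rw [h]; exact SetLike.coe_mem _
          · rw [add_eq_zero_iff_eq_neg] at h
            rw [h]
            exact neg_mem (SetLike.coe_mem _)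
        refine ⟨a / (a ^ 2 - b ^ 2 * e), -b / (a ^ 2 - b ^ 2 * e), ?_⟩
        refine inv_eq_of_mul_eq_one_right ?_
        have hq : ∀ x : E, ((x / (a ^ 2 - b ^ 2 * e) : E) : ℂ) = (x : ℂ) / ((a:ℂ)^2 - (b:ℂ)^2*e) := by
          intro x
          rw [div_eq_mul_inv, div_eq_mul_inv, MulMemClass.coe_mul, IntermediateField.coe_inv]
          push_cast
          ring
        rw [hq, hq]
        push_cast
        field_simp
        linear_combination he * (b:ℂ)^2
  obtain ⟨S, hSc⟩ := hS
  have hle : E ⊔ adjoin ℚ {z} ≤ S := by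
    refine sup_le (fun x hx => ?_) (adjoin_le_iff.2 ?_)
    · show x ∈ (S : Set ℂ)
      rw [hSc]; exact ⟨⟨x, hx⟩, 0, by push_cast; ring⟩
    · rw [Set.singleton_subset_iff]
      show z ∈ (S : Set ℂ)
      rw [hSc]; exact ⟨0, 1, by push_cast; ring⟩
  intro w hw
  have := hle hw
  rw [← SetLike.mem_coe, hSc] at this
  exact this

open Polynomial NumberField NumberField.Units NumberField.InfinitePlace in
private lemma deg_lemma (E : IntermediateField ℚ ℂ) [FiniteDimensional ℚ E]
    (z : ℂ) (hz : z ∉ E) (e : E) (he : (e : ℂ) = z ^ 2) :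
    Module.finrank ℚ ↥(E ⊔ adjoin ℚ {z} : IntermediateField ℚ ℂ) = 2 * Module.finrank ℚ E ∧
    FiniteDimensional ℚ ↥(E ⊔ adjoin ℚ {z} : IntermediateField ℚ ℂ) := by
  have haev : (Polynomial.aeval z) (X ^ 2 - C e) = 0 := by
    simp [he]
  have hint : IsIntegral E z := ⟨X ^ 2 - C e, monic_X_pow_sub_C e (by norm_num), haev⟩
  have hdeg : (minpoly E z).natDegree = 2 := by
    have h1 : minpoly E z ∣ X ^ 2 - C e := minpoly.dvd _ _ haev
    have h2 : (minpoly E z).natDegree ≤ 2 := by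
      have := Polynomial.natDegree_le_of_dvd h1 (by
        intro h0
        have := congrArg Polynomial.natDegree h0
        simp [natDegree_X_pow_sub_C] at this)
      simpa [natDegree_X_pow_sub_C] using this
    have h3 : 2 ≤ (minpoly E z).natDegree := by
      rw [minpoly.two_le_natDegree_iff hint]
      intro ⟨y, hy⟩
      exact hz (hy ▸ SetLike.coe_mem y)
    omega
  have h4 : Module.finrank E ↥(adjoin ↥E {z}) = 2 := by
    rw [adjoin.finrank hint, hdeg]
  haveI h5 : FiniteDimensional ↥E ↥(adjoin ↥E {z}) := adjoin.finiteDimensional hint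
  have hsup : E ⊔ adjoin ℚ {z} = IntermediateField.restrictScalars ℚ (adjoin ↥E {z}) :=
    (IntermediateField.restrictScalars_adjoin_eq_sup (F := ℚ) (E := ℂ) E {z}).symm
  rw [hsup]
  haveI h6 : FiniteDimensional ℚ ↥(IntermediateField.restrictScalars ℚ (adjoin ↥E {z})) := by
    show FiniteDimensional ℚ ↥(adjoin ↥E {z})
    exact Module.Finite.trans ↥E _
  refine ⟨?_, h6⟩
  have h7 : Module.finrank ℚ ↥(adjoin ↥E {z}) = Module.finrank ℚ ↥E * 2 := by
    rw [← h4]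
    exact (Module.finrank_mul_finrank ℚ ↥E ↥(adjoin ↥E {z})).symm
  show Module.finrank ℚ ↥(adjoin ↥E {z}) = 2 * Module.finrank ℚ ↥E
  rw [h7, mul_comm]

open Polynomial NumberField NumberField.Units NumberField.InfinitePlace in
private lemma no_trivial_units (K : IntermediateField ℚ ℂ)
    (hK2 : Module.finrank ℚ K = 2) (hKreal : ∀ x : K, (x : ℂ).im = 0)
    (h : ∀ u : K, IsIntegral ℤ u → IsIntegral ℤ (u⁻¹ : K) → u = 1 ∨ u = -1) : False := by
  classical
  haveI : FiniteDimensional ℚ ↥K := Module.finite_of_finrank_pos (by rw [hK2]; norm_num)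
  haveI : NumberField ↥K := ⟨⟩
  -- the inclusion is a real embedding
  set φ : ↥K →+* ℂ := K.val.toRingHom with hφdef
  have hφ : ComplexEmbedding.IsReal φ := by
    rw [ComplexEmbedding.isReal_iff]
    ext x
    simp only [ComplexEmbedding.conjugate_coe_eq]; exact Complex.conj_eq_iff_im.2 (hKreal x)
  have hwreal : (InfinitePlace.mk φ).IsReal := ⟨φ, hφ, rfl⟩
  haveI : Nonempty {w : InfinitePlace ↥K // w.IsReal} := ⟨⟨_, hwreal⟩⟩
  have hr1 : 0 < nrRealPlaces ↥K := Fintype.card_pos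
  have hr2 : nrRealPlaces ↥K + 2 * nrComplexPlaces ↥K = 2 := by
    rw [card_add_two_mul_card_eq_rank, hK2]
  have hcard : Fintype.card (InfinitePlace ↥K) = 2 := by
    rw [card_eq_nrRealPlaces_add_nrComplexPlaces]
    omega
  have hrank : rank ↥K = 1 := by rw [rank, hcard]
  -- all units are torsion
  have htors : ∀ u : (𝓞 ↥K)ˣ, u ∈ torsion ↥K := by
    intro u
    have hint : IsIntegral ℤ ((algebraMap (𝓞 ↥K) ↥K) (u : 𝓞 ↥K)) :=
      RingOfIntegers.isIntegral_coe _
    have hmul : (algebraMap (𝓞 ↥K) ↥K) (u : 𝓞 ↥K) *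
        (algebraMap (𝓞 ↥K) ↥K) ((u⁻¹ : (𝓞 ↥K)ˣ) : 𝓞 ↥K) = 1 := by
      rw [← map_mul, Units.mul_inv, map_one]
    have hinv : ((algebraMap (𝓞 ↥K) ↥K) (u : 𝓞 ↥K))⁻¹ =
        (algebraMap (𝓞 ↥K) ↥K) ((u⁻¹ : (𝓞 ↥K)ˣ) : 𝓞 ↥K) :=
      eq_inv_of_mul_eq_one_left (by rw [mul_comm] at hmul; exact hmul) |>.symm
    have hint2 : IsIntegral ℤ ((algebraMap (𝓞 ↥K) ↥K) (u : 𝓞 ↥K))⁻¹ := by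
      rw [hinv]; exact RingOfIntegers.isIntegral_coe _
    have hsq : (u : 𝓞 ↥K) ^ 2 = 1 := by
      apply RingOfIntegers.coe_injective
      rcases h _ hint hint2 with h1 | h1 <;>
        · rw [map_pow, map_one, h1]; ring
    rw [torsion, CommGroup.mem_torsion, isOfFinOrder_iff_pow_eq_one]
    exact ⟨2, by norm_num, by ext; push_cast; exact_mod_cast hsq⟩
  haveI hsub : Subsingleton ((𝓞 ↥K)ˣ ⧸ torsion ↥K) := by
    constructor
    intro a b
    induction a using QuotientGroup.induction_on with | H a =>
    induction b using QuotientGroup.induction_on with | H b =>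
    rw [(QuotientGroup.eq_one_iff a).2 (htors a), (QuotientGroup.eq_one_iff b).2 (htors b)]
  have hmod := rank_modTorsion ↥K
  rw [hrank] at hmod
  have h0 : (1 : ℕ) = 0 :=
    hmod.symm.trans (@Module.finrank_zero_of_subsingleton ℤ (Additive ((𝓞 ↥K)ˣ ⧸ torsion ↥K)) _ _ (AddCommGroup.toIntModule _) _ hsub)
  exact one_ne_zero h0

open Polynomial NumberField NumberField.Units NumberField.InfinitePlace in
private lemma coe_div' (E : IntermediateField ℚ ℂ) (x y : E) :
    ((x / y : E) : ℂ) = (x : ℂ) / (y : ℂ) := map_div₀ E.val x y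


/-- Let `K ⊂ ℂ` be a real quadratic field, `ε` a fundamental unit of norm 1,
`α₂ = √ε` a real square root and `β = ε^{1/4}` a fourth root with `β² = α₂`.
Then `α₂ ∉ Z₄ = K(i)` and `[K(i, β) : K(i)] = 4`. -/
theorem kummer_degree_four (K : IntermediateField ℚ ℂ)
    (hK2 : Module.finrank ℚ K = 2) (hKreal : ∀ x : K, (x : ℂ).im = 0)
    (ε : K) (hεint : IsIntegral ℤ ε) (hεinv : IsIntegral ℤ (ε⁻¹ : K))
    (hnorm : Algebra.norm ℚ ε = 1)
    (hfund : ∀ u : K, IsIntegral ℤ u → IsIntegral ℤ (u⁻¹ : K) →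
      ∃ k : ℤ, u = ε ^ k ∨ u = -ε ^ k)
    (α₂ : ℝ) (hα₂ : (α₂ : ℂ) ^ 2 = (ε : ℂ))
    (β : ℂ) (hβ : β ^ 2 = (α₂ : ℂ)) :
    (α₂ : ℂ) ∉ K ⊔ adjoin ℚ {Complex.I} ∧
    Module.finrank ℚ (K ⊔ adjoin ℚ {Complex.I, β} : IntermediateField ℚ ℂ) =
      4 * Module.finrank ℚ (K ⊔ adjoin ℚ {Complex.I} : IntermediateField ℚ ℂ) := by
  classical
  haveI hfd : FiniteDimensional ℚ ↥K := Module.finite_of_finrank_pos (by rw [hK2]; norm_num)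
  have hε0 : ε ≠ 0 := by
    intro h0
    rw [h0, Algebra.norm_zero] at hnorm
    exact one_ne_zero hnorm.symm
  have hεc : (ε : ℂ) ≠ 0 := fun h => hε0 (by exact_mod_cast h)
  have hα0 : α₂ ≠ 0 := by
    intro h0; apply hεc; rw [← hα₂, h0]; norm_num
  -- ε is not a root of unity unless everything collapses
  have hεre : (ε : ℂ) = ((α₂ ^ 2 : ℝ) : ℂ) := by push_cast; exact hα₂.symm
  have hα₂K : (α₂ : ℂ) ∉ K := by
    intro hmem
    set u : K := ⟨(α₂ : ℂ), hmem⟩ with hu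
    have hu2 : u ^ 2 = ε := by
      have h1 : ((u ^ 2 : K) : ℂ) = ((ε : K) : ℂ) := by exact (SubmonoidClass.coe_pow u 2).trans hα₂
      exact_mod_cast h1
    have huint : IsIntegral ℤ u := by
      have h1 : IsIntegral ℤ (u ^ 2) := hu2 ▸ hεint
      exact h1.of_pow two_pos
    have huinv : IsIntegral ℤ (u⁻¹ : K) := by
      have h1 : IsIntegral ℤ ((u⁻¹ : K) ^ 2) := by rw [inv_pow, hu2]; exact hεinv
      exact h1.of_pow two_pos
    obtain ⟨k, hk⟩ := hfund u huint huinv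
    have h2k : ε ^ (k + k) = ε := by
      have : u ^ 2 = ε ^ k * ε ^ k := by
        rcases hk with hk | hk <;> rw [hk] <;> ring
      rw [← zpow_add₀ hε0] at this
      rw [← this, hu2]
    have key : ε ^ (k + k - 1) = 1 := by
      rw [zpow_sub₀ hε0, h2k, zpow_one, div_self hε0]
    -- transfer to ℝ
    have keyC : ((α₂ ^ 2 : ℝ) : ℂ) ^ (k + k - 1) = 1 := by
      rw [← hεre]
      calc ((ε : K) : ℂ) ^ (k + k - 1) = ((ε ^ (k + k - 1) : K) : ℂ) :=
            (map_zpow₀ K.val ε (k + k - 1)).symm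
        _ = 1 := by rw [key]; push_cast; rfl
    have keyR : (α₂ ^ 2 : ℝ) ^ (k + k - 1) = 1 := by
      have := keyC
      rw [← Complex.ofReal_zpow] at this
      exact_mod_cast this
    have hε1 : ε = 1 := by
      have hpos : (0 : ℝ) < α₂ ^ 2 := by positivity
      have hm : k + k - 1 ≠ 0 := by omega
      have hr1 : (α₂ ^ 2 : ℝ) = 1 := by
        rcases Int.natAbs_eq (k + k - 1) with hm' | hm'
        · rw [hm', zpow_natCast] at keyR
          rcases (pow_eq_one_iff_of_ne_zero (by omega : (k + k - 1).natAbs ≠ 0)).1 keyR with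
            h | ⟨h, _⟩
          · exact h
          · linarith
        · rw [hm', zpow_neg, zpow_natCast, inv_eq_one] at keyR
          rcases (pow_eq_one_iff_of_ne_zero (by omega : (k + k - 1).natAbs ≠ 0)).1 keyR with
            h | ⟨h, _⟩
          · exact h
          · linarith
      have : ((ε : K) : ℂ) = ((1 : K) : ℂ) := by rw [hεre, hr1]; push_cast; rfl
      exact_mod_cast this
    -- now all units are ±1, contradicting Dirichlet
    refine no_trivial_units K hK2 hKreal fun v hv hvi => ?_
    obtain ⟨k', hk'⟩ := hfund v hv hvi
    rcases hk' with hk' | hk' <;> rw [hk', hε1] <;> simp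
  -- membership descriptions
  have hIK : Complex.I ∉ K := by
    intro h
    have := hKreal ⟨Complex.I, h⟩
    simp at this
  have hm1K : ((-1 : K) : ℂ) = Complex.I ^ 2 := by push_cast; rw [Complex.I_sq]
  have memL := span_lemma K Complex.I hIK (-1) hm1K
  have Lreal : ∀ w ∈ K ⊔ adjoin ℚ {Complex.I}, w.im = 0 → w ∈ K := by
    intro w hw him
    obtain ⟨a, b, rfl⟩ := memL w hw
    have ha := hKreal a
    have hb := hKreal b
    have hbre : (b : ℂ).re = 0 := by
      have h1 : ((a : ℂ) + (b : ℂ) * Complex.I).im = (b : ℂ).re := by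
        simp [Complex.add_im, Complex.mul_im, ha, hb]
      rw [h1] at him; exact him
    have hb0 : b = 0 := by
      have : (b : ℂ) = 0 := Complex.ext hbre hb
      exact_mod_cast this
    rw [hb0]
    simpa using a.2
  have hα₂L : (α₂ : ℂ) ∉ K ⊔ adjoin ℚ {Complex.I} := fun h =>
    hα₂K (Lreal _ h (Complex.ofReal_im α₂))
  -- the real field F = K(α₂)
  have memF := span_lemma K (α₂ : ℂ) hα₂K ε hα₂.symm
  have Freal : ∀ w ∈ K ⊔ adjoin ℚ {(α₂ : ℂ)}, w.im = 0 := by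
    intro w hw
    obtain ⟨a, b, rfl⟩ := memF w hw
    simp [Complex.add_im, Complex.mul_im, hKreal a, hKreal b]
  have hIF : Complex.I ∉ K ⊔ adjoin ℚ {(α₂ : ℂ)} := by
    intro h
    have := Freal _ h
    simp at this
  have memM := span_lemma (K ⊔ adjoin ℚ {(α₂ : ℂ)}) Complex.I hIF (-1)
    (by push_cast; rw [Complex.I_sq])
  -- β is not in M = F(i)
  have key : ∀ t : (K ⊔ adjoin ℚ {(α₂ : ℂ)} : IntermediateField ℚ ℂ), ∀ s : ℝ,
      (s = 1 ∨ s = -1) → ((t : ℂ).re : ℂ) ^ 2 = (s : ℂ) * (α₂ : ℂ) → False := by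
    intro t s hs hts
    obtain ⟨c, d, hcd⟩ := memF (t : ℂ) t.2
    have hti : (t : ℂ).im = 0 := Freal _ t.2
    have htt : ((t : ℂ).re : ℂ) = (t : ℂ) := (Complex.ext rfl (by simp [hti])) 
    have hEq : ((c : ℂ)) ^ 2 + (d : ℂ) ^ 2 * (ε : ℂ) + (2 * c * d - s) * (α₂ : ℂ) = 0 := by
      rw [htt, hcd] at hts
      linear_combination hts - (d : ℂ) ^ 2 * hα₂
    by_cases hcase : 2 * (c : ℂ) * (d : ℂ) - (s : ℂ) = 0
    · have hd0 : (d : ℂ) ≠ 0 := by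
        intro h0
        rw [h0] at hcase
        rcases hs with hs | hs <;> rw [hs] at hcase <;> norm_num at hcase
      have hD : (d : ℂ).im = 0 := hKreal d
      have hC : (c : ℂ).im = 0 := hKreal c
      have hc2 : ((c : ℂ).re : ℂ) = (c : ℂ) := Complex.ext rfl (by simp [hC])
      have hd2 : ((d : ℂ).re : ℂ) = (d : ℂ) := Complex.ext rfl (by simp [hD])
      have hre : (((c : ℂ).re ^ 2 + (d : ℂ).re ^ 2 * α₂ ^ 2 : ℝ) : ℂ) = 0 := by
        push_cast
        rw [hc2, hd2]
        linear_combination hEq - hcase * (α₂ : ℂ) + (d:ℂ)^2 * hα₂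
      have hreR : (c : ℂ).re ^ 2 + (d : ℂ).re ^ 2 * α₂ ^ 2 = 0 := by exact_mod_cast hre
      have hdR : (d : ℂ).re ≠ 0 := by
        intro h0; apply hd0; rw [← hd2, h0]; simp
      have hpos : 0 < (d : ℂ).re ^ 2 * α₂ ^ 2 := by positivity
      nlinarith [sq_nonneg (c : ℂ).re]
    · apply hα₂K
      have hsK : ∃ sK : K, ((sK : K) : ℂ) = (s : ℂ) := by
        rcases hs with hs | hs <;> rw [hs]
        · exact ⟨1, by push_cast; norm_num⟩
        · exact ⟨-1, by push_cast; norm_num⟩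
      obtain ⟨sK, hsKc⟩ := hsK
      have hden : ((c * d + c * d - sK : K) : ℂ) ≠ 0 := by
        push_cast
        rw [hsKc]
        intro h0
        apply hcase
        linear_combination h0
      have : (α₂ : ℂ) = ((-(c ^ 2 + d ^ 2 * ε) / (c * d + c * d - sK) : K) : ℂ) := by
        rw [coe_div', eq_div_iff hden]
        push_cast
        rw [hsKc]
        linear_combination hEq
      rw [this]
      exact SetLike.coe_mem _
  have hβM : β ∉ (K ⊔ adjoin ℚ {(α₂ : ℂ)}) ⊔ adjoin ℚ {Complex.I} := by
    intro hm
    obtain ⟨a, b, hab⟩ := memM β hm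
    have hA : ((a : ℂ).re : ℂ) = (a : ℂ) := Complex.ext rfl (by simp [Freal _ a.2])
    have hB : ((b : ℂ).re : ℂ) = (b : ℂ) := Complex.ext rfl (by simp [Freal _ b.2])
    set A := (a : ℂ).re
    set B := (b : ℂ).re
    have h2 : ((A : ℂ) + (B : ℂ) * Complex.I) ^ 2 = (α₂ : ℂ) := by
      rw [hA, hB, ← hab]; exact hβ
    have hexp : ((A ^ 2 - B ^ 2 : ℝ) : ℂ) + ((2 * A * B : ℝ) : ℂ) * Complex.I = (α₂ : ℂ) := by
      push_cast
      linear_combination h2 - (B : ℂ) ^ 2 * Complex.I_sq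
    have hre : A ^ 2 - B ^ 2 = α₂ := by
      have h := congrArg Complex.re hexp
      simp only [Complex.add_re, Complex.ofReal_re, Complex.mul_re, Complex.I_re,
        Complex.I_im, Complex.ofReal_im] at h
      linarith
    have him : 2 * A * B = 0 := by
      have h := congrArg Complex.im hexp
      simp only [Complex.add_im, Complex.ofReal_im, Complex.mul_im, Complex.I_re,
        Complex.I_im, Complex.ofReal_re] at h
      linarith
    have him' : A * B = 0 := by linarith
    rcases mul_eq_zero.1 him' with hA0 | hB0
    · refine key b (-1) (Or.inr rfl) ?_
      show ((B : ℝ) : ℂ) ^ 2 = ((-1 : ℝ) : ℂ) * (α₂ : ℂ)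
      push_cast
      have : A ^ 2 - B ^ 2 = α₂ := hre
      rw [hA0] at this
      have hB2 : (B : ℝ) ^ 2 = -α₂ := by linarith
      rw [show ((B:ℝ):ℂ)^2 = (((B:ℝ)^2 : ℝ) : ℂ) by push_cast; ring, hB2]
      push_cast; ring
    · refine key a 1 (Or.inl rfl) ?_
      show ((A : ℝ) : ℂ) ^ 2 = ((1 : ℝ) : ℂ) * (α₂ : ℂ)
      have : A ^ 2 - B ^ 2 = α₂ := hre
      rw [hB0] at this
      have hA2 : (A : ℝ) ^ 2 = α₂ := by linarith
      rw [show ((A:ℝ):ℂ)^2 = (((A:ℝ)^2 : ℝ) : ℂ) by push_cast; ring, hA2]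
      push_cast; ring
  -- degree computation
  have hd1 := deg_lemma K Complex.I hIK (-1) hm1K
  haveI hFDL := hd1.2
  have hεL : (ε : ℂ) ∈ K ⊔ adjoin ℚ {Complex.I} :=
    (le_sup_left : K ≤ K ⊔ adjoin ℚ {Complex.I}) ε.2
  have hd2 := deg_lemma (K ⊔ adjoin ℚ {Complex.I}) (α₂ : ℂ) hα₂L ⟨(ε : ℂ), hεL⟩ hα₂.symm
  haveI hFDM := hd2.2
  have hMeq : (K ⊔ adjoin ℚ {(α₂ : ℂ)}) ⊔ adjoin ℚ {Complex.I}
      = (K ⊔ adjoin ℚ {Complex.I}) ⊔ adjoin ℚ {(α₂ : ℂ)} := sup_right_comm _ _ _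
  have hβM' : β ∉ (K ⊔ adjoin ℚ {Complex.I}) ⊔ adjoin ℚ {(α₂ : ℂ)} := by
    rw [← hMeq]; exact hβM
  have hα₂M : (α₂ : ℂ) ∈ (K ⊔ adjoin ℚ {Complex.I}) ⊔ adjoin ℚ {(α₂ : ℂ)} :=
    (le_sup_right : adjoin ℚ {(α₂ : ℂ)} ≤ _) (mem_adjoin_simple_self ℚ _)
  have hd3 := deg_lemma ((K ⊔ adjoin ℚ {Complex.I}) ⊔ adjoin ℚ {(α₂ : ℂ)}) β hβM'
    ⟨(α₂ : ℂ), hα₂M⟩ hβ.symm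
  have hab : adjoin ℚ {(α₂ : ℂ)} ≤ adjoin ℚ {β} := by
    rw [adjoin_simple_le_iff, ← hβ]
    exact pow_mem (mem_adjoin_simple_self ℚ β) 2
  have hTeq : K ⊔ adjoin ℚ {Complex.I, β}
      = ((K ⊔ adjoin ℚ {Complex.I}) ⊔ adjoin ℚ {(α₂ : ℂ)}) ⊔ adjoin ℚ {β} := by
    rw [show ({Complex.I, β} : Set ℂ) = {Complex.I} ∪ {β} from by rw [Set.insert_eq]]
    rw [adjoin_union, ← sup_assoc]
    rw [sup_assoc (K ⊔ adjoin ℚ {Complex.I}), sup_eq_right.mpr hab]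
  exact ⟨hα₂L, by rw [hTeq, hd3.1, hd2.1]; ring⟩
end

section
/- Let K, ε, K_n be as above with ε a norm-one unit in the real quadratic field K. Then log|disc(K_n/Q)| ≤ C_K · [K_n : K] · log n for all n ≥ 2, for some constant C_K depending only on K. More precisely, disc(K_n/Q) divides n^{4[K_n:K]} · disc(K/Q)^{[K_n:K]}. -/
open Matrix Module Polynomial

theorem det_blockFactor {R : Type*} [CommRing R] {ι κ : Type*} [Fintype ι] [Fintype κ]
    [DecidableEq ι] [DecidableEq κ] (A : Matrix ι ι R) (B : ι → Matrix κ κ R) :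
    (Matrix.of (fun (p q : ι × κ) => A p.1 q.1 * B q.1 p.2 q.2)).det
      = A.det ^ (Fintype.card κ) * ∏ i, (B i).det := by
  have hM : Matrix.of (fun (p q : ι × κ) => A p.1 q.1 * B q.1 p.2 q.2)
      = (Matrix.kroneckerMap (· * ·) A (1 : Matrix κ κ R)) *
        ((Matrix.blockDiagonal (fun i => B i)).submatrix
          (Equiv.prodComm ι κ) (Equiv.prodComm ι κ)) := by
    ext p q
    simp only [Matrix.mul_apply, Matrix.of_apply, Matrix.kroneckerMap_apply,
      Matrix.submatrix_apply, Equiv.prodComm_apply, Prod.swap_prod_mk,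
      Matrix.blockDiagonal_apply, Matrix.one_apply]
    rw [Finset.sum_eq_single (q.1, p.2)]
    · simp
    · rintro ⟨s1, s2⟩ _ hs
      by_cases h1 : p.2 = s2
      · by_cases h2 : s1 = q.1
        · exact absurd (by simp [h1, h2]) hs
        · simp [h2]
      · simp [h1]
    · simp
  rw [hM, Matrix.det_mul, Matrix.det_submatrix_equiv_self, Matrix.det_blockDiagonal]
  rw [Matrix.det_kronecker, Matrix.det_one, one_pow, mul_one]

theorem discr_tower {F K L : Type*} [Field F] [Field K] [Field L]
    [Algebra F K] [Algebra K L] [Algebra F L] [IsScalarTower F K L]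
    [FiniteDimensional F K] [FiniteDimensional K L] [CharZero F]
    {ι κ : Type*} [Fintype ι] [Fintype κ] [DecidableEq ι] [DecidableEq κ]
    (b : Basis ι F K) (c : Basis κ K L) :
    Algebra.discr F ⇑(b.smulTower c) =
      Algebra.norm F (Algebra.discr K c) * (Algebra.discr F b) ^ (finrank K L) := by
  have hchK : CharZero K := charZero_of_injective_algebraMap (algebraMap F K).injective
  have hchL : CharZero L := charZero_of_injective_algebraMap (algebraMap F L).injective
  have hFD : FiniteDimensional F L := FiniteDimensional.trans F K L
  set E := AlgebraicClosure F with hE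
  have hcardι : Fintype.card ι = Fintype.card (K →ₐ[F] E) := by
    rw [AlgHom.card F K E, ← finrank_eq_card_basis b]
  let eK : ι ≃ (K →ₐ[F] E) := Fintype.equivOfCardEq hcardι
  let eτ : ∀ τ : K →ₐ[F] E, κ ≃ (@AlgHom K L E _ _ _ _ τ.toRingHom.toAlgebra) := fun τ => by
    letI : Algebra K E := τ.toRingHom.toAlgebra
    exact Fintype.equivOfCardEq (by rw [AlgHom.card K L E, ← finrank_eq_card_basis c])
  let e : (ι × κ) ≃ (L →ₐ[F] E) :=
    ((Equiv.sigmaEquivProd ι κ).symm.trans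
      (Equiv.sigmaCongr eK (fun i => eτ (eK i)))).trans algHomEquivSigma.symm
  have he : ∀ (i' : ι) (r' : κ) (x : L), e (i', r') x = (eτ (eK i') r') x := by
    intro i' r' x
    rfl
  have heK : ∀ (i' : ι) (r' : κ) (x : K), e (i', r') (algebraMap K L x) = eK i' x := by
    intro i' r' x
    rw [he]
    letI : Algebra K E := (eK i').toRingHom.toAlgebra
    exact (eτ (eK i') r').commutes x
  set AM : Matrix ι ι E := Algebra.embeddingsMatrixReindex F E ⇑b eK with hAM
  set BM : ι → Matrix κ κ E := fun i' => Matrix.of (fun r r' => (eτ (eK i') r') (c r)) with hBM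
  have key : Algebra.embeddingsMatrixReindex F E ⇑(b.smulTower c) e
      = Matrix.of (fun p q : ι × κ => AM p.1 q.1 * BM q.1 p.2 q.2) := by
    ext ⟨i, r⟩ ⟨i', r'⟩
    simp only [Algebra.embeddingsMatrixReindex, Algebra.embeddingsMatrix,
      Matrix.reindex_apply, Matrix.submatrix_apply, Equiv.refl_symm, Equiv.coe_refl, id_eq,
      Equiv.symm_symm, Matrix.of_apply]
    rw [Basis.smulTower_apply, Algebra.smul_def, _root_.map_mul, heK, he]
    rfl
  -- the two squared determinant identities
  have hdA : AM.det ^ 2 = algebraMap F E (Algebra.discr F b) :=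
    (Algebra.discr_eq_det_embeddingsMatrixReindex_pow_two F E ⇑b eK).symm
  have hdB : ∀ i' : ι, (BM i').det ^ 2 = eK i' (Algebra.discr K c) := by
    intro i'
    letI : Algebra K E := (eK i').toRingHom.toAlgebra
    have : BM i' = Algebra.embeddingsMatrixReindex K E ⇑c (eτ (eK i')) := by
      ext r r'
      simp [Algebra.embeddingsMatrixReindex, Algebra.embeddingsMatrix, hBM]
    rw [this, ← Algebra.discr_eq_det_embeddingsMatrixReindex_pow_two K E ⇑c (eτ (eK i'))]
    rfl
  apply (algebraMap F E).injective
  rw [Algebra.discr_eq_det_embeddingsMatrixReindex_pow_two F E ⇑(b.smulTower c) e, key,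
    det_blockFactor, mul_pow, ← pow_mul, mul_comm (Fintype.card κ) 2, pow_mul, hdA,
    ← Finset.prod_pow]
  simp_rw [hdB]
  rw [_root_.map_mul, map_pow, Algebra.norm_eq_prod_embeddings F E (Algebra.discr K c),
    ← Fintype.prod_equiv eK (fun i' => eK i' (Algebra.discr K c))
      (fun σ => σ (Algebra.discr K c)) (fun i' => rfl)]
  rw [finrank_eq_card_basis c]
  rw [mul_comm]

theorem aeval_isIntegral_aux {F L : Type*} [Field F] [Field L] [Algebra F L]
    {x : L} (hx : IsIntegral ℤ x) {g : F[X]} (hg : g.Monic)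
    (hroots : ∀ r : AlgebraicClosure L, aeval r g = 0 → IsIntegral ℤ r) :
    IsIntegral ℤ (aeval x g) := by
  set A := AlgebraicClosure L
  rw [← isIntegral_algebraMap_iff (algebraMap L A).injective,
    ← Polynomial.aeval_algebraMap_apply]
  set y := algebraMap L A x with hy
  have hyint : IsIntegral ℤ y := hx.map (IsScalarTower.toAlgHom ℤ L A)
  set gA := g.map (algebraMap F A) with hgA
  have hgAm : gA.Monic := hg.map _
  have hsplit : gA.Splits := by
    exact IsAlgClosed.splits gA
  have hprod := hsplit.eq_prod_roots_of_monic hgAm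
  have : aeval y g = eval y gA := by rw [hgA, eval_map, aeval_def]
  rw [this, hprod]
  rw [← mem_integralClosure_iff ℤ A]
  rw [eval_multiset_prod, Multiset.map_map]
  refine Subalgebra.multiset_prod_mem _ ?_
  intro p hp
  simp only [Multiset.mem_map, Function.comp_apply] at hp
  obtain ⟨r, hr, rfl⟩ := hp
  have hrint : IsIntegral ℤ r := by
    refine hroots r ?_
    have : eval r gA = 0 := by
      exact (mem_roots hgAm.ne_zero).1 hr
    rwa [hgA, eval_map, ← aeval_def] at this
  simp only [eval_sub, eval_X, eval_C]
  exact sub_mem ((mem_integralClosure_iff ℤ A).2 hyint) ((mem_integralClosure_iff ℤ A).2 hrint)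

/-- Discriminant of a power basis whose generator is an integral unit satisfying
`gen ^ n = u` "integrally divides" `n ^ dim`. -/
theorem discr_powerBasis_int_dvd {F L : Type*} [Field F] [Field L] [Algebra F L]
    [FiniteDimensional F L] [CharZero F]
    (pb : PowerBasis F L) {n : ℕ} (hn : n ≠ 0) {u : F}
    (hgen : pb.gen ^ n = algebraMap F L u) (hu : IsIntegral ℤ u)
    (hgen0 : pb.gen ≠ 0)
    (hint : IsIntegral ℤ pb.gen) (hinv : IsIntegral ℤ pb.gen⁻¹) :
    ∃ t : F, IsIntegral ℤ t ∧ (n : F) ^ pb.dim = Algebra.discr F pb.basis * t := by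
  have hchL : CharZero L := charZero_of_injective_algebraMap (algebraMap F L).injective
  set f := minpoly F pb.gen with hf
  have hfm : f.Monic := minpoly.monic (Algebra.IsIntegral.isIntegral pb.gen)
  have hPm : (X ^ n - C u : F[X]).Monic := monic_X_pow_sub_C u hn
  have hdvd : f ∣ X ^ n - C u := by
    apply minpoly.dvd
    simp [hgen]
  obtain ⟨g, hg⟩ := hdvd
  have hgm : g.Monic := hfm.of_mul_monic_left (hg ▸ hPm)
  -- key evaluation identity
  have hkey : (n : L) * pb.gen ^ (n - 1) = aeval pb.gen (derivative f) * aeval pb.gen g := by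
    have h1 : derivative (X ^ n - C u : F[X]) = C (n : F) * X ^ (n - 1) := by
      simp [derivative_X_pow]
    have h2 : aeval pb.gen (derivative (X ^ n - C u : F[X])) = (n : L) * pb.gen ^ (n - 1) := by
      rw [h1]; simp [map_natCast]
    rw [← h2, hg, derivative_mul, map_add, _root_.map_mul, _root_.map_mul, minpoly.aeval,
      zero_mul, add_zero]
  -- integrality of aeval pb.gen g
  have hgint : IsIntegral ℤ (aeval pb.gen g) := by
    refine aeval_isIntegral_aux hint hgm ?_
    intro r hr
    have hrpow : aeval r (X ^ n - C u : F[X]) = 0 := by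
      rw [hg, _root_.map_mul, hr, mul_zero]
    have : r ^ n = algebraMap F (AlgebraicClosure L) u := by
      simpa [sub_eq_zero] using hrpow
    refine IsIntegral.of_pow (Nat.pos_of_ne_zero hn) ?_
    rw [this]
    exact hu.map (IsScalarTower.toAlgHom ℤ F (AlgebraicClosure L))
  -- norms
  have hsep : Algebra.IsSeparable F L := inferInstance
  set N := Algebra.norm F (S := L) with hN
  set s : F := (-1) ^ (Module.finrank F L * (Module.finrank F L - 1) / 2) with hs
  have hdiscr : Algebra.discr F pb.basis = s * N (aeval pb.gen (derivative f)) :=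
    Algebra.discr_powerBasis_eq_norm F pb
  have hss : s * s = 1 := by
    rw [hs, ← pow_add, ← two_mul, pow_mul]
    simp
  have hNn : N ((n : L)) = (n : F) ^ pb.dim := by
    have : ((n : L)) = algebraMap F L ((n : F)) := by simp
    rw [this, Algebra.norm_algebraMap, pb.finrank]
  have hNginv : N pb.gen * N pb.gen⁻¹ = 1 := by
    rw [← _root_.map_mul, mul_inv_cancel₀ hgen0, _root_.map_one]
  refine ⟨s * N (aeval pb.gen g) * N pb.gen⁻¹ ^ (n - 1), ?_, ?_⟩
  · refine IsIntegral.mul (IsIntegral.mul ?_ ?_) (IsIntegral.pow ?_ _)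
    · rw [hs]; exact (IsIntegral.pow (IsIntegral.neg isIntegral_one) _)
    · exact Algebra.isIntegral_norm F hgint
    · exact Algebra.isIntegral_norm F hinv
  · have hmain : N ((n : L)) * N pb.gen ^ (n - 1) =
        N (aeval pb.gen (derivative f)) * N (aeval pb.gen g) := by
      rw [← _root_.map_mul, ← hkey, _root_.map_mul, map_pow]
    calc (n : F) ^ pb.dim = N ((n : L)) * (N pb.gen * N pb.gen⁻¹) ^ (n - 1) := by
          rw [hNginv, one_pow, mul_one, hNn]
      _ = (N ((n : L)) * N pb.gen ^ (n - 1)) * N pb.gen⁻¹ ^ (n - 1) := by ring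
      _ = N (aeval pb.gen (derivative f)) * N (aeval pb.gen g) * N pb.gen⁻¹ ^ (n - 1) := by
          rw [hmain]
      _ = (s * s) * N (aeval pb.gen (derivative f)) * N (aeval pb.gen g)
            * N pb.gen⁻¹ ^ (n - 1) := by rw [hss, one_mul]
      _ = Algebra.discr F pb.basis * (s * N (aeval pb.gen g) * N pb.gen⁻¹ ^ (n - 1)) := by
          rw [hdiscr]; ring

set_option maxHeartbeats 2000000 in
open IntermediateField NumberField in
/-- Let `K` be a real quadratic number field.  There is a constant `C_K`
depending only on `K` such that for every norm-one unit `ε` of `O_K`, every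
`n ≥ 2` and every `E = K(ζ_n, ε^{1/n})`, one has
`disc(E/ℚ) ∣ n^{4[E:K]} · disc(K/ℚ)^{[E:K]}`, and hence
`log |disc(E/ℚ)| ≤ C_K · [E:K] · log n`. -/
theorem discr_bound (K : Type*) [Field K] [NumberField K]
    (hK2 : Module.finrank ℚ K = 2) (hKreal : Nonempty (K →+* ℝ)) :
    ∃ C : ℝ, 0 < C ∧
      ∀ (ε : K), IsIntegral ℤ ε → IsIntegral ℤ ε⁻¹ → Algebra.norm ℚ ε = 1 →
      ∀ (n : ℕ), 2 ≤ n →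
      ∀ (E : Type) (_ : Field E) (_ : NumberField E) (_ : Algebra K E),
      ∀ (ζ α : E), IsPrimitiveRoot ζ n → α ^ n = algebraMap K E ε →
      IntermediateField.adjoin K {ζ, α} = ⊤ →
      (NumberField.discr E ∣
          (n : ℤ) ^ (4 * Module.finrank K E) *
            (NumberField.discr K) ^ (Module.finrank K E)) ∧
      Real.log |(NumberField.discr E : ℝ)| ≤
        C * (Module.finrank K E) * Real.log n := by
  classical
  have hlog2 : (0 : ℝ) < Real.log 2 := Real.log_pos (by norm_num)
  set C : ℝ := 4 + abs (Real.log (abs ((NumberField.discr K : ℝ)))) / Real.log 2 + 1 with hC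
  have hCpos : 0 < C := by
    have h1 : 0 ≤ abs (Real.log (abs ((NumberField.discr K : ℝ)))) / Real.log 2 :=
      div_nonneg (abs_nonneg _) hlog2.le
    rw [hC]; linarith
  refine ⟨C, hCpos, ?_⟩
  intro ε hεint hεinvint hεnorm n hn E _ _ _ ζ α hζ hα hadj
  have hn0 : n ≠ 0 := by omega
  have hnpos : 0 < n := by omega
  haveI : IsScalarTower ℚ K E := IsScalarTower.of_algebraMap_eq' (Subsingleton.elim _ _)
  haveI : FiniteDimensional K E := FiniteDimensional.right ℚ K E
  -- basic integrality facts
  have hζne : ζ ≠ 0 := hζ.ne_zero hn0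
  have hζint : IsIntegral ℤ ζ := hζ.isIntegral hnpos
  have hζpow : ζ ^ n = 1 := hζ.pow_eq_one
  have hζmul : ζ * ζ ^ (n - 1) = 1 := by
    rw [← pow_succ']
    rw [Nat.sub_add_cancel (by omega)]
    exact hζpow
  have hζinveq : ζ⁻¹ = ζ ^ (n - 1) := inv_eq_of_mul_eq_one_right hζmul
  have hζinv : IsIntegral ℤ ζ⁻¹ := by
    rw [hζinveq]; exact hζint.pow _
  have hεne : ε ≠ 0 := by
    intro h; rw [h] at hεnorm; simp [Algebra.norm_zero] at hεnorm
  have hαint : IsIntegral ℤ α := IsIntegral.of_pow hnpos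
    (by rw [hα]; exact hεint.map (IsScalarTower.toAlgHom ℤ K E))
  have hαne : α ≠ 0 := by
    intro h
    apply hεne
    rw [h, zero_pow hn0] at hα
    exact ((_root_.map_eq_zero (algebraMap K E)).mp hα.symm)
  have hαinv : IsIntegral ℤ α⁻¹ := IsIntegral.of_pow hnpos
    (by rw [inv_pow, hα, ← map_inv₀]; exact hεinvint.map (IsScalarTower.toAlgHom ℤ K E))
  -- the intermediate field Z = K(ζ)
  have hζKint : IsIntegral K ζ := IsIntegral.of_finite K ζ
  let pb1 : PowerBasis K K⟮ζ⟯ := IntermediateField.adjoin.powerBasis hζKint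
  have hg1 : algebraMap K⟮ζ⟯ E pb1.gen = ζ := by
    rw [IntermediateField.adjoin.powerBasis_gen]
    exact IntermediateField.AdjoinSimple.algebraMap_gen K ζ
  have hinj1 : Function.Injective (algebraMap K⟮ζ⟯ E) := (algebraMap K⟮ζ⟯ E).injective
  have hg1pow : pb1.gen ^ n = algebraMap K K⟮ζ⟯ 1 := by
    apply hinj1
    rw [map_pow, hg1, hζpow, ← IsScalarTower.algebraMap_apply]
    simp
  have hg10 : pb1.gen ≠ 0 := by
    intro h; apply hζne; rw [← hg1, h, map_zero]
  have hg1int : IsIntegral ℤ pb1.gen :=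
    (isIntegral_algebraMap_iff hinj1).mp (by rw [hg1]; exact hζint)
  have hg1inv : IsIntegral ℤ pb1.gen⁻¹ :=
    (isIntegral_algebraMap_iff hinj1).mp (by rw [map_inv₀, hg1]; exact hζinv)
  obtain ⟨t1, ht1, h1⟩ := discr_powerBasis_int_dvd pb1 hn0 hg1pow isIntegral_one hg10 hg1int hg1inv
  -- power basis of E over Z generated by α
  have hZα : IntermediateField.adjoin K⟮ζ⟯ ({α} : Set E) = ⊤ := by
    apply IntermediateField.restrictScalars_injective K
    rw [IntermediateField.adjoin_adjoin_left, IntermediateField.restrictScalars_top,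
      Set.singleton_union]
    exact hadj
  have hαZint : IsIntegral K⟮ζ⟯ α := IsIntegral.of_finite K⟮ζ⟯ α
  let e2 : K⟮ζ⟯⟮α⟯ ≃ₐ[K⟮ζ⟯] E := (IntermediateField.equivOfEq hZα).trans IntermediateField.topEquiv
  let pb2 : PowerBasis K⟮ζ⟯ E := (IntermediateField.adjoin.powerBasis hαZint).map e2
  have hpb2gen : pb2.gen = α := rfl
  have hg2pow : pb2.gen ^ n = algebraMap K⟮ζ⟯ E (algebraMap K K⟮ζ⟯ ε) := by
    rw [hpb2gen, hα, ← IsScalarTower.algebraMap_apply]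
  have hu2 : IsIntegral ℤ (algebraMap K K⟮ζ⟯ ε) := hεint.map (IsScalarTower.toAlgHom ℤ K K⟮ζ⟯)
  obtain ⟨t2, ht2, h2⟩ := discr_powerBasis_int_dvd pb2 hn0 hg2pow hu2
    (by rw [hpb2gen]; exact hαne) (by rw [hpb2gen]; exact hαint) (by rw [hpb2gen]; exact hαinv)
  -- tower K ⊆ Z ⊆ E
  set d1 := pb1.dim with hd1def
  set d2 := pb2.dim with hd2def
  set m := Module.finrank K E with hmdef
  have hd1 : Module.finrank K K⟮ζ⟯ = d1 := pb1.finrank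
  have hd2 : Module.finrank K⟮ζ⟯ E = d2 := pb2.finrank
  have hm : d1 * d2 = m := by
    rw [← hd1, ← hd2, hmdef]
    exact Module.finrank_mul_finrank K K⟮ζ⟯ E
  set c : Basis (Fin d1 × Fin d2) K E := pb1.basis.smulTower pb2.basis with hcdef
  have htow1 : Algebra.discr K ⇑c =
      Algebra.norm K (Algebra.discr K⟮ζ⟯ ⇑pb2.basis) * Algebra.discr K ⇑pb1.basis ^ d2 := by
    rw [hcdef, discr_tower pb1.basis pb2.basis, hd2]
  have e1 : (n : K) ^ (d1 * d2) =
      Algebra.norm K (Algebra.discr K⟮ζ⟯ ⇑pb2.basis) * Algebra.norm K t2 := by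
    have hh := congrArg (Algebra.norm K) h2
    rw [_root_.map_mul, map_pow] at hh
    have hnz : ((n : K⟮ζ⟯)) = algebraMap K K⟮ζ⟯ ((n : K)) := by simp
    rw [hnz, Algebra.norm_algebraMap, hd1, ← pow_mul] at hh
    exact hh
  have e2' : (n : K) ^ (d1 * d2) = Algebra.discr K ⇑pb1.basis ^ d2 * t1 ^ d2 := by
    rw [pow_mul, h1, mul_pow]
  have hc : (n : K) ^ (2 * m) = Algebra.discr K ⇑c * (Algebra.norm K t2 * t1 ^ d2) := by
    rw [← hm, two_mul, pow_add]
    nth_rewrite 1 [e1]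
    rw [e2', htow1]
    ring
  -- tower ℚ ⊆ K ⊆ E
  set B : Basis _ ℚ E := (NumberField.integralBasis K).smulTower c with hBdef
  have htow2 : Algebra.discr ℚ ⇑B =
      Algebra.norm ℚ (Algebra.discr K ⇑c) * ((NumberField.discr K : ℚ)) ^ m := by
    rw [hBdef, discr_tower (NumberField.integralBasis K) c, NumberField.coe_discr, hmdef]
  set T2 : ℚ := Algebra.norm ℚ (Algebra.norm K t2 * t1 ^ d2) with hT2def
  have hT2 : IsIntegral ℤ T2 :=
    Algebra.isIntegral_norm ℚ ((Algebra.isIntegral_norm K ht2).mul (ht1.pow _))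
  have h4 : (n : ℚ) ^ (4 * m) = Algebra.norm ℚ (Algebra.discr K ⇑c) * T2 := by
    have hh := congrArg (Algebra.norm ℚ) hc
    rw [_root_.map_mul, map_pow] at hh
    have hnq : ((n : K)) = algebraMap ℚ K ((n : ℚ)) := by simp
    rw [hnq, Algebra.norm_algebraMap, hK2, ← pow_mul] at hh
    rw [show 4 * m = 2 * (2 * m) by ring]
    exact hh
  have h5 : (n : ℚ) ^ (4 * m) * ((NumberField.discr K : ℚ)) ^ m =
      Algebra.discr ℚ ⇑B * T2 := by
    rw [h4, htow2]; ring
  -- integrality of the elements of B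
  have hBint : ∀ p, IsIntegral ℤ (B p) := by
    rintro ⟨i, j, k⟩
    rw [hBdef, Basis.smulTower_apply, Algebra.smul_def]
    refine IsIntegral.mul ?_ ?_
    · rw [NumberField.integralBasis_apply]
      exact (NumberField.RingOfIntegers.isIntegral_coe _).map (IsScalarTower.toAlgHom ℤ K E)
    · rw [hcdef, Basis.smulTower_apply, Algebra.smul_def]
      refine IsIntegral.mul ?_ ?_
      · have : pb1.basis j = pb1.gen ^ (j : ℕ) := pb1.basis_eq_pow j
        rw [this, map_pow, hg1]
        exact hζint.pow _
      · have : pb2.basis k = pb2.gen ^ (k : ℕ) := pb2.basis_eq_pow k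
        rw [this, hpb2gen]
        exact hαint.pow _
  -- change of basis to the integral basis of E
  set bE := NumberField.integralBasis E with hbEdef
  let eIdx := B.indexEquiv bE
  set B' : Basis _ ℚ E := B.reindex eIdx with hB'def
  have hBB' : Algebra.discr ℚ ⇑B' = Algebra.discr ℚ ⇑B := by
    rw [hB'def, Basis.coe_reindex, Algebra.discr_reindex]
  have hdiscB' : Algebra.discr ℚ ⇑B' = (bE.toMatrix ⇑B').det ^ 2 * Algebra.discr ℚ ⇑bE := by
    nth_rewrite 1 [← bE.toMatrix_map_vecMul ⇑B']
    rw [Algebra.discr_of_matrix_vecMul]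
  have hB'int : ∀ p, IsIntegral ℤ (B' p) := by
    intro p
    have : B' p = B (eIdx.symm p) := by rw [hB'def, Basis.reindex_apply]
    rw [this]
    exact hBint _
  have hPint : ∀ i j, IsIntegral ℤ (bE.toMatrix ⇑B' i j) := by
    intro i j
    rw [Basis.toMatrix_apply]
    obtain ⟨x, hx⟩ : ∃ x : NumberField.RingOfIntegers E, algebraMap _ E x = B' j :=
      ⟨⟨B' j, hB'int j⟩, rfl⟩
    rw [hbEdef, ← hx, NumberField.integralBasis_repr_apply]
    exact isIntegral_algebraMap
  have hPdet : IsIntegral ℤ (bE.toMatrix ⇑B').det := IsIntegral.det fun i j => hPint i j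
  have hq : IsIntegral ℤ ((bE.toMatrix ⇑B').det ^ 2 * T2) := (hPdet.pow 2).mul hT2
  obtain ⟨z, hz⟩ := IsIntegrallyClosed.isIntegral_iff.1 hq
  have hdiscE : Algebra.discr ℚ ⇑bE = ((NumberField.discr E : ℚ)) := (NumberField.coe_discr E).symm
  have hfinalQ : ((n : ℚ)) ^ (4 * m) * ((NumberField.discr K : ℚ)) ^ m
      = ((NumberField.discr E : ℚ)) * ((z : ℚ)) := by
    have hzq : ((z : ℚ)) = (bE.toMatrix ⇑B').det ^ 2 * T2 := by
      rw [← hz]; simp [algebraMap_int_eq]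
    rw [hzq, h5, ← hBB', hdiscB', hdiscE]; ring
  have hdvd : NumberField.discr E ∣ (n : ℤ) ^ (4 * m) * (NumberField.discr K) ^ m := by
    refine ⟨z, ?_⟩
    exact_mod_cast hfinalQ
  refine ⟨hdvd, ?_⟩
  -- the logarithmic bound
  have hdEne : NumberField.discr E ≠ 0 := NumberField.discr_ne_zero E
  have hdKne : NumberField.discr K ≠ 0 := NumberField.discr_ne_zero K
  have hmpos : 0 < m := Module.finrank_pos
  have hRHSne : (n : ℤ) ^ (4 * m) * (NumberField.discr K) ^ m ≠ 0 :=
    mul_ne_zero (pow_ne_zero _ (by exact_mod_cast hn0)) (pow_ne_zero _ hdKne)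
  have habs : |NumberField.discr E| ≤ |(n : ℤ) ^ (4 * m) * (NumberField.discr K) ^ m| :=
    Int.le_of_dvd (abs_pos.mpr hRHSne) ((abs_dvd _ _).mpr ((dvd_abs _ _).mpr hdvd))
  have habsR : |(NumberField.discr E : ℝ)| ≤ (n : ℝ) ^ (4 * m) * |(NumberField.discr K : ℝ)| ^ m := by
    have h' : ((|NumberField.discr E| : ℤ) : ℝ) ≤
        ((|(n : ℤ) ^ (4 * m) * (NumberField.discr K) ^ m| : ℤ) : ℝ) := by exact_mod_cast habs
    push_cast at h'
    rw [abs_mul, abs_pow, abs_pow, abs_of_nonneg (by positivity : (0:ℝ) ≤ (n : ℝ))] at h'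
    exact h'
  have hnR0 : (0:ℝ) < (n : ℝ) := by exact_mod_cast hnpos
  have hdKR0 : (0:ℝ) < |(NumberField.discr K : ℝ)| := by
    simp only [abs_pos]
    exact_mod_cast hdKne
  have hdER0 : (0:ℝ) < |(NumberField.discr E : ℝ)| := by
    simp only [abs_pos]
    exact_mod_cast hdEne
  have hlogle : Real.log |(NumberField.discr E : ℝ)| ≤
      Real.log ((n : ℝ) ^ (4 * m) * |(NumberField.discr K : ℝ)| ^ m) :=
    Real.log_le_log hdER0 habsR
  have hexp : Real.log ((n : ℝ) ^ (4 * m) * |(NumberField.discr K : ℝ)| ^ m)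
      = ((4 * m : ℕ) : ℝ) * Real.log (n : ℝ) + (m : ℝ) * Real.log |(NumberField.discr K : ℝ)| := by
    rw [Real.log_mul (by positivity) (by positivity), Real.log_pow, Real.log_pow]
  have hlogn : Real.log 2 ≤ Real.log (n : ℝ) := by
    apply Real.log_le_log (by norm_num)
    exact_mod_cast hn
  have hlognpos : 0 < Real.log (n : ℝ) := lt_of_lt_of_le hlog2 hlogn
  have hm1 : (1 : ℝ) ≤ (m : ℝ) := by exact_mod_cast hmpos
  have hLabs : Real.log |(NumberField.discr K : ℝ)| ≤ abs (Real.log (abs ((NumberField.discr K : ℝ)))) :=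
    le_abs_self _
  have hdiv : abs (Real.log (abs ((NumberField.discr K : ℝ)))) / Real.log 2 * Real.log 2
      = abs (Real.log (abs ((NumberField.discr K : ℝ)))) := div_mul_cancel₀ _ hlog2.ne'
  have hdivnn : 0 ≤ abs (Real.log (abs ((NumberField.discr K : ℝ)))) / Real.log 2 :=
    div_nonneg (abs_nonneg _) hlog2.le
  calc Real.log |(NumberField.discr E : ℝ)|
      ≤ ((4 * m : ℕ) : ℝ) * Real.log (n : ℝ) + (m : ℝ) * Real.log |(NumberField.discr K : ℝ)| := by
        rw [← hexp]; exact hlogle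
    _ ≤ C * (m : ℝ) * Real.log (n : ℝ) := by
        rw [hC]
        push_cast
        nlinarith [mul_le_mul_of_nonneg_left hlogn (mul_nonneg hdivnn (by linarith : (0:ℝ) ≤ (m:ℝ))),
          mul_le_mul_of_nonneg_left hLabs (by linarith : (0:ℝ) ≤ (m:ℝ)),
          mul_pos hlognpos (lt_of_lt_of_le zero_lt_one hm1)]
end
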